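/- Succinctness of reconfigurable semantics, upper bound: for every n ≥ 1, there exists a reconfigurable execution of the broadcast protocol P_n covering {☺} whose size is exactly 3 (i.e., which uses only 3 nodes). -/
import Mathlib


/-- A broadcast protocol over finite state set `Q` and finite message alphabet `M`.
`I` is the set of initial states, `br q m q'` means `(q, !!m, q') ∈ Δ` (a broadcast
transition) and `rcv q m q'` means `(q, ??m, q') ∈ Δ` (a reception transition).
The protocol is complete for receptions. -/
structure BroadcastProtocol (Q M : Type) [Fintype Q] [DecidableEq Q] [Fintype M] where
  I : Finset Q
  br : Q → M → Q → Prop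
  rcv : Q → M → Q → Prop
  complete : ∀ q m, ∃ q', rcv q m q'

section Execs
variable {Q M : Type} [Fintype Q] [DecidableEq Q] [Fintype M]

/-- A reconfigurable execution of length `r` over the finite node type `ν`:
`lab i v` is the state of node `v` in the `i`-th configuration, `edges i` is the
(symmetric, irreflexive) communication topology of the `i`-th configuration,
and in the `i`-th step node `sender i` broadcasts message `msg i` to its
neighbours; the topology may change arbitrarily at each step. -/
structure RExec (P : BroadcastProtocol Q M) (ν : Type) [Fintype ν] [DecidableEq ν]
    (r : ℕ) where
  lab : Fin (r + 1) → ν → Q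
  edges : Fin (r + 1) → ν → ν → Prop
  edges_symm : ∀ i, Symmetric (edges i)
  edges_irrefl : ∀ i, Irreflexive (edges i)
  sender : Fin r → ν
  msg : Fin r → M
  init : ∀ v, lab 0 v ∈ P.I
  step_br : ∀ i : Fin r, P.br (lab i.castSucc (sender i)) (msg i) (lab i.succ (sender i))
  step_rcv : ∀ i : Fin r, ∀ v, v ≠ sender i →
    (edges i.castSucc (sender i) v → P.rcv (lab i.castSucc v) (msg i) (lab i.succ v)) ∧
    (¬ edges i.castSucc (sender i) v → lab i.succ v = lab i.castSucc v)

namespace RExec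

variable {P : BroadcastProtocol Q M} {ν : Type} [Fintype ν] [DecidableEq ν] {r : ℕ}

/-- Labelling of the last configuration. -/
def lastLab (ρ : RExec P ν r) : ν → Q := ρ.lab (Fin.last r)

/-- The execution covers `F` if a node of the last configuration is labelled in `F`. -/
def Covers (ρ : RExec P ν r) (F : Set Q) : Prop := ∃ v, ρ.lastLab v ∈ F

/-- The active length of node `v`: the number of steps in which `v` broadcasts. -/
def activeLen (ρ : RExec P ν r) (v : ν) : ℕ :=
  (Finset.univ.filter fun i : Fin r => ρ.sender i = v).card

end RExec

end Execs
/- ## The protocol P_n (succinctness) -/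

abbrev PnQ (n : ℕ) := Fin (2 * n + 1) ⊕ (Fin n ⊕ Unit)
abbrev PnM (n : ℕ) := Option (Fin n)

def PnBr (n : ℕ) : PnQ n → PnM n → PnQ n → Prop
  | .inl k, none, q' => (k : ℕ) = 0 ∧ q' = .inl k
  | .inl k, some i, q' =>
      (k : ℕ) = 2 * (i : ℕ) + 1 ∧ ∃ h : (k : ℕ) + 1 < 2 * n + 1, q' = .inl ⟨(k : ℕ) + 1, h⟩
  | _, _, _ => False

def PnRcv (n : ℕ) : PnQ n → PnM n → PnQ n → Prop
  | .inl k, none, q' =>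
      ((k : ℕ) % 2 = 0 ∧ ∃ _h : (k : ℕ) < 2 * n, q' = Sum.inl ⟨(k : ℕ) + 1, by omega⟩)
      ∨ (¬ ((k : ℕ) % 2 = 0 ∧ (k : ℕ) < 2 * n) ∧ q' = .inl k)
  | .inl k, some i, q' =>
      ((k : ℕ) = 0 ∧ q' = .inr (.inr ()))
      ∨ ((k : ℕ) = 0 ∧ (i : ℕ) = 0 ∧ q' = .inr (.inl ⟨0, Fin.pos i⟩))
      ∨ ((k : ℕ) ≠ 0 ∧ q' = .inl k)
  | .inr (.inl j), none, q' => q' = .inr (.inl j)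
  | .inr (.inl j), some i, q' =>
      ((i : ℕ) = (j : ℕ) + 1 ∧ ∃ h : (j : ℕ) + 1 < n, q' = .inr (.inl ⟨(j : ℕ) + 1, h⟩))
      ∨ ((i : ℕ) ≠ (j : ℕ) + 1 ∧ q' = .inr (.inl j))
  | .inr (.inr _), _, q' => q' = .inr (.inr ())

def PnProt (n : ℕ) : BroadcastProtocol (PnQ n) (PnM n) where
  I := {Sum.inl (0 : Fin (2 * n + 1))}
  br := PnBr n
  rcv := PnRcv n
  complete := by
    rintro (k | j | u) (_ | i)
    · by_cases h : (k : ℕ) % 2 = 0 ∧ (k : ℕ) < 2 * n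
      · exact ⟨Sum.inl ⟨(k : ℕ) + 1, by omega⟩, Or.inl ⟨h.1, h.2, rfl⟩⟩
      · exact ⟨Sum.inl k, Or.inr ⟨h, rfl⟩⟩
    · by_cases h : (k : ℕ) = 0
      · exact ⟨Sum.inr (Sum.inr ()), Or.inl ⟨h, rfl⟩⟩
      · exact ⟨Sum.inl k, Or.inr (Or.inr ⟨h, rfl⟩)⟩
    · exact ⟨Sum.inr (Sum.inl j), rfl⟩
    · by_cases h : (i : ℕ) = (j : ℕ) + 1
      · exact ⟨Sum.inr (Sum.inl ⟨(j : ℕ) + 1, by have := i.isLt; omega⟩),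
          Or.inl ⟨h, by have := i.isLt; omega, rfl⟩⟩
      · exact ⟨Sum.inr (Sum.inl j), Or.inr ⟨h, rfl⟩⟩
    · exact ⟨Sum.inr (Sum.inr ()), rfl⟩
    · exact ⟨Sum.inr (Sum.inr ()), rfl⟩

def PnSmiley (n : ℕ) (hn : 1 ≤ n) : PnQ n := Sum.inr (Sum.inl ⟨n - 1, by omega⟩)


/-- **Succinctness of reconfigurable semantics, upper bound.** For every `n ≥ 1`
there is a reconfigurable execution of `P_n` covering `{☺}` with exactly 3 nodes. -/
theorem succinct_reconfigurable_three_nodes (n : ℕ) (hn : 1 ≤ n) :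
    ∃ (r : ℕ) (ρ : RExec (PnProt n) (Fin 3) r), ρ.Covers {PnSmiley n hn} := by
  refine ⟨2 * n,
    { lab := fun i v => if v.val = 0 then .inl 0 else if v.val = 1 then .inl i
        else if i.val ≤ 1 then .inl 0
        else .inr (.inl ⟨(i.val - 2) / 2, by have := i.isLt; omega⟩)
      edges := fun i u v => if i.val % 2 = 0 then ((u.val = 0 ∧ v.val = 1) ∨ (u.val = 1 ∧ v.val = 0))
        else ((u.val = 1 ∧ v.val = 2) ∨ (u.val = 2 ∧ v.val = 1))
      edges_symm := by intro i u v h; split_ifs at * <;> tauto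
      edges_irrefl := by intro i u h; split_ifs at h <;> omega
      sender := fun i => if i.val % 2 = 0 then 0 else 1
      msg := fun i => if i.val % 2 = 0 then none
        else some ⟨i.val / 2, by have := i.isLt; omega⟩
      init := by intro v; fin_cases v <;> simp [PnProt]
      step_br := ?_
      step_rcv := ?_ }, ?_⟩
  · intro i
    by_cases hp : i.val % 2 = 0
    · simp [hp, PnProt, PnBr]
    · simp only [hp, ite_false, reduceIte, Fin.coe_castSucc, Fin.val_succ, PnProt]
      simp only [Fin.val_one, one_ne_zero, ite_false, ite_true, reduceIte, PnBr]
      refine ⟨by simp only [Fin.coe_castSucc]; omega,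
        by simp only [Fin.coe_castSucc]; have := i.isLt; omega, ?_⟩
      simp [Fin.ext_iff]
  · intro i v hv
    have hv3 : v.val = 0 ∨ v.val = 1 ∨ v.val = 2 := by have := v.isLt; omega
    by_cases hp : i.val % 2 = 0
    · -- sender is 0
      have hvz : v.val ≠ 0 := by
        intro h
        apply hv
        ext
        simp [hp, h]
      rcases hv3 with h0 | h1 | h2
      · exact absurd h0 hvz
      · -- node 1, connected
        refine ⟨fun _ => ?_, fun hne => absurd ?_ hne⟩
        · simp only [PnProt, hp, ite_true, reduceIte, Fin.coe_castSucc, Fin.val_succ,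
            h1, one_ne_zero, ite_false]
          simp only [PnRcv]
          refine Or.inl ⟨by simp only [Fin.coe_castSucc]; exact hp,
            by simp only [Fin.coe_castSucc]; have := i.isLt; omega, by simp [Fin.ext_iff]⟩
        · simp [hp, h1]
      · -- node 2, not connected
        refine ⟨fun he => ?_, fun _ => ?_⟩
        · simp [hp, h2] at he
        · simp only [Fin.val_succ, Fin.coe_castSucc, h2]
          norm_num
          split_ifs with h1 h2 h2
          · rfl
          · omega
          · omega
          · simp [Fin.ext_iff]
            omega
    · -- sender is 1
      have hvo : v.val ≠ 1 := by
        intro h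
        apply hv
        ext
        simp [hp, h]
      rcases hv3 with h0 | h1 | h2
      · -- node 0, not connected
        refine ⟨fun he => ?_, fun _ => ?_⟩
        · simp [hp, h0] at he
        · simp [h0]
      · exact absurd h1 hvo
      · -- node 2, connected
        refine ⟨fun _ => ?_, fun hne => absurd ?_ hne⟩
        · simp only [PnProt, hp, ite_false, reduceIte, Fin.coe_castSucc, Fin.val_succ, h2]
          norm_num
          split_ifs with ha hb hb
          · omega
          · -- i.val = 1 : q0 receives b1
            have hi1 : i.val = 1 := by omega
            simp only [PnRcv]
            exact Or.inr (Or.inl ⟨rfl, by simp [hi1], by simp [Fin.ext_iff, hi1]⟩)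
          · omega
          · simp only [PnRcv]
            refine Or.inl ⟨by omega, by have := i.isLt; omega, ?_⟩
            simp only [Sum.inr.injEq, Sum.inl.injEq, Fin.mk.injEq]
            omega
        · simp [hp, h2]
  · refine ⟨2, ?_⟩
    simp only [RExec.lastLab, Fin.last, PnSmiley, Set.mem_singleton_iff]
    norm_num
    split_ifs with h
    · omega
    · simp [Fin.ext_iff]
      omega
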